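/- For every element x of Q, every u ∈ {a, b, e, f}, and all integers i and j: x^{cⁱ u} = x^{u c⁻ⁱ} and x^{dʲ u} = x^{u d⁻ʲ}; that is, S_u ∘ S_cⁱ = S_c⁻ⁱ ∘ S_u and S_u ∘ S_dʲ = S_d⁻ʲ ∘ S_u as maps on Q. -/
import Mathlib


/-- A quandle as in the paper: a set with operations `▷` and `▷⁻¹` satisfying
axioms A1, A2, A3. -/
class PaperQuandle (Q : Type*) where
  rhd : Q → Q → Q
  rhdInv : Q → Q → Q
  fix : ∀ x : Q, rhd x x = x
  inv_rhd : ∀ x y : Q, rhdInv (rhd x y) y = x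
  rhd_inv : ∀ x y : Q, rhd (rhdInv x y) y = x
  self_distrib : ∀ x y z : Q, rhd (rhd x y) z = rhd (rhd x z) (rhd y z)

infixl:65 " ▷ " => PaperQuandle.rhd
infixl:65 " ▷⁻¹ " => PaperQuandle.rhdInv

/-- The point symmetry at `u`, as a permutation of `Q`: `x ↦ x ▷ u`,
with inverse `x ↦ x ▷⁻¹ u`. -/
def ptSym {Q : Type*} [PaperQuandle Q] (u : Q) : Equiv.Perm Q where
  toFun x := x ▷ u
  invFun x := x ▷⁻¹ u
  left_inv x := PaperQuandle.inv_rhd x u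
  right_inv x := PaperQuandle.rhd_inv x u

section Aux
variable {G : Type*} [Group G]

private lemma conj_zpow' (u p : G) (hu : u * u = 1) (h : u * p * u = p⁻¹) (j : ℤ) :
    u * p ^ j * u = p ^ (-j) := by
  have hu' : u⁻¹ = u := inv_eq_of_mul_eq_one_right hu
  have h' : u * p * u⁻¹ = p⁻¹ := by rw [hu']; exact h
  have key : (u * p * u⁻¹) ^ j = u * p ^ j * u := by rw [conj_zpow, hu']
  calc u * p ^ j * u = (u * p * u⁻¹) ^ j := key.symm
    _ = p ^ (-j) := by rw [h', inv_zpow, zpow_neg]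

private lemma swap_zpow (u p : G) (hu : u * u = 1) (h : u * p * u = p⁻¹) (j : ℤ) :
    u * p ^ j = p ^ (-j) * u := by
  have h2 := conj_zpow' u p hu h j
  calc u * p ^ j = (u * p ^ j * u) * u := by rw [mul_assoc, hu, mul_one]
    _ = p ^ (-j) * u := by rw [h2]

private lemma group_key (A B C D E F : G) (k : ℤ)
    (hA : A * A = 1) (hB : B * B = 1) (hE : E * E = 1) (hF : F * F = 1)
    (hdea : A * E * D = 1) (hbdf : F * D * B = 1)
    (hcke : E * A * (B * A) ^ k * C = 1)
    (hfca : A * (B * A) ^ (k - 1) * C * F = 1) :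
    (A * C * A = C⁻¹ ∧ B * C * B = C⁻¹ ∧ E * C * E = C⁻¹ ∧ F * C * F = C⁻¹) ∧
    (A * D * A = D⁻¹ ∧ B * D * B = D⁻¹ ∧ E * D * E = D⁻¹ ∧ F * D * F = D⁻¹) := by
  have iA : A⁻¹ = A := inv_eq_of_mul_eq_one_right hA
  have iB : B⁻¹ = B := inv_eq_of_mul_eq_one_right hB
  have iE : E⁻¹ = E := inv_eq_of_mul_eq_one_right hE
  have iF : F⁻¹ = F := inv_eq_of_mul_eq_one_right hF
  have sA : ∀ g : G, A * (A * g) = g := fun g => by rw [← mul_assoc, hA, one_mul]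
  have sB : ∀ g : G, B * (B * g) = g := fun g => by rw [← mul_assoc, hB, one_mul]
  have sE : ∀ g : G, E * (E * g) = g := fun g => by rw [← mul_assoc, hE, one_mul]
  have sF : ∀ g : G, F * (F * g) = g := fun g => by rw [← mul_assoc, hF, one_mul]
  -- D expressions
  have hD1 : D = E * A := by
    have h1 : D = (A * E)⁻¹ := eq_inv_of_mul_eq_one_right hdea
    rw [h1, mul_inv_rev, iA, iE]
  have hD2 : D = F * B := by
    have h1 : F * D = B⁻¹ := eq_inv_of_mul_eq_one_left hbdf
    have h2 : F * (F * D) = F * B := by rw [h1, iB]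
    rwa [sF] at h2
  -- C expressions
  have hC1 : C = (B * A) ^ (-k) * (A * E) := by
    have h1 : C = (E * A * (B * A) ^ k)⁻¹ := eq_inv_of_mul_eq_one_right hcke
    rw [h1, mul_inv_rev, mul_inv_rev, iA, iE, zpow_neg]
  have hC2 : C = (B * A) ^ (-(k - 1)) * (A * F) := by
    have h1 : A * (B * A) ^ (k - 1) * C = F⁻¹ := eq_inv_of_mul_eq_one_left hfca
    have h2 : C = (A * (B * A) ^ (k - 1))⁻¹ * F⁻¹ := by rw [← h1]; group
    rw [h2, mul_inv_rev, iA, iF, zpow_neg, mul_assoc]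
  -- relations between E, F
  have hAE : A * E = B * F := by
    have h := hC1.symm.trans hC2
    have h2 : (B * A) ^ k * ((B * A) ^ (-k) * (A * E)) =
        (B * A) ^ k * ((B * A) ^ (-(k - 1)) * (A * F)) := by rw [h]
    have hL : (B * A) ^ k * ((B * A) ^ (-k) * (A * E)) = A * E := by group
    have hR : (B * A) ^ k * ((B * A) ^ (-(k - 1)) * (A * F)) = (B * A) * (A * F) := by group
    rw [hL, hR] at h2
    have h3 : (B * A) * (A * F) = B * F := by rw [mul_assoc, sA]
    exact h2.trans h3
  have hF1 : F = B * (A * E) := by rw [hAE, sB]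
  have hEA : E * A = F * B := hD1.symm.trans hD2
  have hF2 : F = E * A * B := by rw [hEA, mul_assoc, hB, mul_one]
  have hE1 : E = A * (B * F) := by rw [← hAE, sA]
  -- conjugation of B*A by each of A, B, E, F
  have cA : A * (B * A) * A = (B * A)⁻¹ := by
    rw [mul_inv_rev, iA, iB]
    calc A * (B * A) * A = A * (B * (A * A)) := by group
      _ = A * B := by rw [hA, mul_one]
  have cB : B * (B * A) * B = (B * A)⁻¹ := by
    rw [mul_inv_rev, iA, iB]
    calc B * (B * A) * B = B * (B * (A * B)) := by group
      _ = A * B := by rw [sB]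
  have cE : E * (B * A) * E = (B * A)⁻¹ := by
    rw [mul_inv_rev, iA, iB, hE1]
    simp only [mul_assoc, sA, sB, hF, mul_one]
  have cF : F * (B * A) * F = (B * A)⁻¹ := by
    rw [mul_inv_rev, iA, iB, hF2]
    simp only [mul_assoc, sA, sB, sE, hA, hB, hE, mul_one]
  -- commutation facts
  have commEA : Commute (E * A) (B * A) := by
    show (E * A) * (B * A) = (B * A) * (E * A)
    calc (E * A) * (B * A) = (E * A * B) * A := by group
      _ = (B * (A * E)) * A := by rw [← hF2, hF1]
      _ = (B * A) * (E * A) := by group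
  have commFA : Commute (F * A) (B * A) := by
    show (F * A) * (B * A) = (B * A) * (F * A)
    conv_lhs => rw [hF1]
    conv_rhs => rw [hF2]
    group
  have commFB : Commute (F * B) (B * A) := by
    show (F * B) * (B * A) = (B * A) * (F * B)
    calc (F * B) * (B * A) = F * (B * B) * A := by group
      _ = F * A := by rw [hB, mul_one]
      _ = (B * (A * E)) * A := by rw [hF1]
      _ = (B * A) * (E * A) := by group
      _ = (B * A) * (F * B) := by rw [hEA]
  -- C inverses
  have hCinv1 : C⁻¹ = (E * A) * (B * A) ^ k := by
    rw [hC1, mul_inv_rev, mul_inv_rev, iA, iE, zpow_neg, inv_inv]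
  have hCinv2 : C⁻¹ = (F * A) * (B * A) ^ (k - 1) := by
    rw [hC2, mul_inv_rev, mul_inv_rev, iA, iF, zpow_neg, inv_inv]
  -- conjugated powers
  have hPA' : A * (B * A) ^ (-(k - 1)) * A = (B * A) ^ (k - 1) := by
    have := conj_zpow' A (B * A) hA cA (-(k - 1)); rwa [neg_neg] at this
  have hPB' : B * (B * A) ^ (-k) * B = (B * A) ^ k := by
    have := conj_zpow' B (B * A) hB cB (-k); rwa [neg_neg] at this
  have hPE' : E * (B * A) ^ (-k) * E = (B * A) ^ k := by
    have := conj_zpow' E (B * A) hE cE (-k); rwa [neg_neg] at this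
  have hPF' : F * (B * A) ^ (-(k - 1)) * F = (B * A) ^ (k - 1) := by
    have := conj_zpow' F (B * A) hF cF (-(k - 1)); rwa [neg_neg] at this
  -- C conjugations
  have cAC : A * C * A = C⁻¹ := by
    calc A * C * A = (A * (B * A) ^ (-(k - 1)) * A) * (A⁻¹ * ((A * F) * A)) := by
          rw [hC2]; group
      _ = (B * A) ^ (k - 1) * (A⁻¹ * ((A * F) * A)) := by rw [hPA']
      _ = (B * A) ^ (k - 1) * (F * A) := by rw [iA]; simp only [mul_assoc, sA]
      _ = (F * A) * (B * A) ^ (k - 1) := (commFA.zpow_right (k - 1)).eq.symm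
      _ = C⁻¹ := hCinv2.symm
  have cEC : E * C * E = C⁻¹ := by
    calc E * C * E = (E * (B * A) ^ (-k) * E) * (E⁻¹ * ((A * E) * E)) := by
          rw [hC1]; group
      _ = (B * A) ^ k * (E⁻¹ * ((A * E) * E)) := by rw [hPE']
      _ = (B * A) ^ k * (E * A) := by rw [iE]; simp only [mul_assoc, hE, mul_one]
      _ = (E * A) * (B * A) ^ k := (commEA.zpow_right k).eq.symm
      _ = C⁻¹ := hCinv1.symm
  have cBC : B * C * B = C⁻¹ := by
    calc B * C * B = (B * (B * A) ^ (-k) * B) * (B⁻¹ * ((A * E) * B)) := by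
          rw [hC1]; group
      _ = (B * A) ^ k * (B⁻¹ * ((A * E) * B)) := by rw [hPB']
      _ = (B * A) ^ k * ((B * (A * E)) * B) := by rw [iB]; group
      _ = (B * A) ^ k * (F * B) := by rw [← hF1]
      _ = (F * B) * (B * A) ^ k := (commFB.zpow_right k).eq.symm
      _ = (E * A) * (B * A) ^ k := by rw [hEA]
      _ = C⁻¹ := hCinv1.symm
  have cFC : F * C * F = C⁻¹ := by
    calc F * C * F = (F * (B * A) ^ (-(k - 1)) * F) * (F⁻¹ * ((A * F) * F)) := by
          rw [hC2]; group
      _ = (B * A) ^ (k - 1) * (F⁻¹ * ((A * F) * F)) := by rw [hPF']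
      _ = (B * A) ^ (k - 1) * (F * A) := by rw [iF]; simp only [mul_assoc, hF, mul_one]
      _ = (F * A) * (B * A) ^ (k - 1) := (commFA.zpow_right (k - 1)).eq.symm
      _ = C⁻¹ := hCinv2.symm
  -- D conjugations
  have cAD : A * D * A = D⁻¹ := by
    rw [hD1, mul_inv_rev, iA, iE]
    calc A * (E * A) * A = A * (E * (A * A)) := by group
      _ = A * E := by rw [hA, mul_one]
  have cED : E * D * E = D⁻¹ := by
    rw [hD1, mul_inv_rev, iA, iE]
    calc E * (E * A) * E = E * (E * (A * E)) := by group
      _ = A * E := by rw [sE]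
  have cBD : B * D * B = D⁻¹ := by
    rw [hD2, mul_inv_rev, iB, iF]
    calc B * (F * B) * B = B * (F * (B * B)) := by group
      _ = B * F := by rw [hB, mul_one]
  have cFD : F * D * F = D⁻¹ := by
    rw [hD2, mul_inv_rev, iB, iF]
    calc F * (F * B) * F = F * (F * (B * F)) := by group
      _ = B * F := by rw [sF]
  exact ⟨⟨cAC, cBC, cEC, cFC⟩, ⟨cAD, cBD, cED, cFD⟩⟩

end Aux

theorem stmt_8
    {Q : Type*} [PaperQuandle Q] (k : ℤ) (m n : ℕ) (a b c d e f : Q)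
    (hk : 1 ≤ k) (hm : 0 < m) (hn : 0 < n)
    (rel_a : ∀ x : Q, x ▷ a ▷ a = x)
    (rel_b : ∀ x : Q, x ▷ b ▷ b = x)
    (rel_e : ∀ x : Q, x ▷ e ▷ e = x)
    (rel_f : ∀ x : Q, x ▷ f ▷ f = x)
    (rel_c : ∀ x : Q, (ptSym c ^ m) x = x)
    (rel_d : ∀ x : Q, (ptSym d ^ n) x = x)
    (rel_dea : ∀ x : Q, x ▷ d ▷ e ▷ a = x)
    (rel_bdf : ∀ x : Q, x ▷ b ▷ d ▷ f = x)
    (rel_cke : ∀ x : Q, (((ptSym b * ptSym a) ^ k) (x ▷ c)) ▷ a ▷ e = x)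
    (rel_fca : ∀ x : Q, (((ptSym b * ptSym a) ^ (k - 1)) (x ▷ f ▷ c)) ▷ a = x) :
    ∀ x : Q, ∀ u ∈ ({a, b, e, f} : Set Q), ∀ i j : ℤ,
      ((ptSym c ^ i) x) ▷ u = (ptSym c ^ (-i)) (x ▷ u) ∧
      ((ptSym d ^ j) x) ▷ u = (ptSym d ^ (-j)) (x ▷ u) := by
  have hA : ptSym a * ptSym a = 1 := Equiv.ext rel_a
  have hB : ptSym b * ptSym b = 1 := Equiv.ext rel_b
  have hE : ptSym e * ptSym e = 1 := Equiv.ext rel_e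
  have hF : ptSym f * ptSym f = 1 := Equiv.ext rel_f
  have hdea : ptSym a * ptSym e * ptSym d = 1 := Equiv.ext rel_dea
  have hbdf : ptSym f * ptSym d * ptSym b = 1 := Equiv.ext rel_bdf
  have hcke : ptSym e * ptSym a * (ptSym b * ptSym a) ^ k * ptSym c = 1 := Equiv.ext rel_cke
  have hfca : ptSym a * (ptSym b * ptSym a) ^ (k - 1) * ptSym c * ptSym f = 1 :=
    Equiv.ext rel_fca
  obtain ⟨⟨cAC, cBC, cEC, cFC⟩, ⟨cAD, cBD, cED, cFD⟩⟩ :=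
    group_key (ptSym a) (ptSym b) (ptSym c) (ptSym d) (ptSym e) (ptSym f) k
      hA hB hE hF hdea hbdf hcke hfca
  intro x u hu i j
  simp only [Set.mem_insert_iff, Set.mem_singleton_iff] at hu
  rcases hu with rfl | rfl | rfl | rfl
  · exact ⟨DFunLike.congr_fun (swap_zpow _ _ hA cAC i) x,
      DFunLike.congr_fun (swap_zpow _ _ hA cAD j) x⟩
  · exact ⟨DFunLike.congr_fun (swap_zpow _ _ hB cBC i) x,
      DFunLike.congr_fun (swap_zpow _ _ hB cBD j) x⟩
  · exact ⟨DFunLike.congr_fun (swap_zpow _ _ hE cEC i) x,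
      DFunLike.congr_fun (swap_zpow _ _ hE cED j) x⟩
  · exact ⟨DFunLike.congr_fun (swap_zpow _ _ hF cFC i) x,
      DFunLike.congr_fun (swap_zpow _ _ hF cFD j) x⟩
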